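/- For every real λ ≠ 0 one has the identity X_a(λ)·X_b(−λ)·A(λ) + Y_a(λ)·Y_b(−λ)·B(λ) = (2/(ħ²λ))·cosh(ħλ/2). (This is the coefficient identity underlying the commutator [a(λ), b(μ)] = [b(λ), a(μ)] = (2/(ħ²λ))cosh(ħλ/2)·δ(λ+μ).) -/

import Mathlib

/-- for every real λ ≠ 0,
`X_a(λ)·X_b(−λ)·A(λ) + Y_a(λ)·Y_b(−λ)·B(λ) = (2/(ħ²λ))·cosh(ħλ/2)`. -/
theorem stmt_7 (ℏ η η' : ℝ) (hℏ : 0 < ℏ) (hη : 0 < η) (hη' : 0 < η')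
    (hrel : 1 / η' = 1 / η + ℏ)
    (D A B Xa Xb Ya Yb : ℝ → ℝ)
    (hD : ∀ l : ℝ, D l =
      4 * Real.cosh (ℏ * l / 2) +
        ((Real.sinh (l / (2 * η)))⁻¹ - (Real.sinh (l / (2 * η')))⁻¹) * Real.sinh (ℏ * l) + 2)
    (hA : ∀ l : ℝ, A l = l / D l)
    (hB : ∀ l : ℝ, B l =
      l * ((1 + (Real.sinh (l / (2 * η)))⁻¹ * Real.sinh (ℏ * l)) *
            (1 - (Real.sinh (l / (2 * η')))⁻¹ * Real.sinh (ℏ * l)) -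
            4 * (Real.cosh (ℏ * l / 2)) ^ 2) / D l)
    (hXa : ∀ l : ℝ, Xa l =
      (1 / (ℏ * l)) * ((Real.sinh (l / (2 * η)))⁻¹ * Real.sinh (ℏ * l) + 2 * Real.cosh (ℏ * l / 2) + 1))
    (hXb : ∀ l : ℝ, Xb l =
      (1 / (ℏ * l)) * ((Real.sinh (l / (2 * η')))⁻¹ * Real.sinh (ℏ * l) - 2 * Real.cosh (ℏ * l / 2) - 1))
    (hYa : ∀ l : ℝ, Ya l = 1 / (ℏ * l))
    (hYb : ∀ l : ℝ, Yb l = 1 / (ℏ * l)) :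
    ∀ l : ℝ, l ≠ 0 →
      Xa l * Xb (-l) * A l + Ya l * Yb (-l) * B l =
        (2 / (ℏ ^ 2 * l)) * Real.cosh (ℏ * l / 2) := by
  intro l hl
  have hℏ0 : ℏ ≠ 0 := ne_of_gt hℏ
  have hb : l / (2 * η') = l / (2 * η) + ℏ * l / 2 := by
    have h1 : l / (2 * η') = (l / 2) * (1 / η') := by ring
    rw [h1, hrel]; ring
  have hcross : 0 ≤ ((Real.sinh (l / (2 * η)))⁻¹ - (Real.sinh (l / (2 * η')))⁻¹) * Real.sinh (ℏ * l) := by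
    rcases lt_or_gt_of_ne hl with hneg | hpos
    · have ha : l / (2 * η) < 0 := div_neg_of_neg_of_pos hneg (by positivity)
      have hblt : l / (2 * η') < l / (2 * η) := by rw [hb]; nlinarith
      have hsa : Real.sinh (l / (2 * η)) < 0 := Real.sinh_neg_iff.mpr ha
      have hsb : Real.sinh (l / (2 * η')) < Real.sinh (l / (2 * η)) := Real.sinh_lt_sinh.mpr hblt
      have hsb0 : Real.sinh (l / (2 * η')) < 0 := hsb.trans hsa
      have hinv : (Real.sinh (l / (2 * η)))⁻¹ < (Real.sinh (l / (2 * η')))⁻¹ :=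
        (inv_lt_inv_of_neg hsa hsb0).mpr hsb
      have hsh : Real.sinh (ℏ * l) < 0 := Real.sinh_neg_iff.mpr (by nlinarith)
      nlinarith
    · have ha : 0 < l / (2 * η) := div_pos hpos (by positivity)
      have hblt : l / (2 * η) < l / (2 * η') := by rw [hb]; nlinarith
      have hsa : 0 < Real.sinh (l / (2 * η)) := Real.sinh_pos_iff.mpr ha
      have hsb : Real.sinh (l / (2 * η)) < Real.sinh (l / (2 * η')) := Real.sinh_lt_sinh.mpr hblt
      have hinv : (Real.sinh (l / (2 * η')))⁻¹ < (Real.sinh (l / (2 * η)))⁻¹ :=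
        inv_strictAnti₀ hsa hsb
      have hsh : 0 < Real.sinh (ℏ * l) := Real.sinh_pos_iff.mpr (by nlinarith)
      nlinarith
  have hc1 : 1 ≤ Real.cosh (ℏ * l / 2) := Real.one_le_cosh _
  rw [hXa, hXb, hYa, hYb, hA, hB, hD]
  have e1 : Real.sinh (ℏ * -l) = -Real.sinh (ℏ * l) := by rw [mul_neg, Real.sinh_neg]
  have e2 : Real.cosh (ℏ * -l / 2) = Real.cosh (ℏ * l / 2) := by
    rw [mul_neg, neg_div, Real.cosh_neg]
  have e3 : (Real.sinh (-l / (2 * η')))⁻¹ = -(Real.sinh (l / (2 * η')))⁻¹ := by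
    rw [neg_div, Real.sinh_neg, inv_neg]
  rw [e1, e2, e3]
  set c := Real.cosh (ℏ * l / 2) with hc
  set S := Real.sinh (ℏ * l) with hS
  set u := (Real.sinh (l / (2 * η)))⁻¹ with hu
  set v := (Real.sinh (l / (2 * η')))⁻¹ with hv
  have hDpos : (0:ℝ) < 4 * c + (u - v) * S + 2 := by nlinarith
  have hDne : 4 * c + (u - v) * S + 2 ≠ 0 := ne_of_gt hDpos
  field_simp
  ring_nf
  have hDne' : 2 + u * S - S * v + c * 4 ≠ 0 := by intro h; apply hDne; linarith
  field_simp
  ring
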